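/- arXiv:2111.04349 — 5 statements merged into one kernel-verified Lean document; each statement's English description precedes it below -/
import Mathlib

section
/- The function v̄(x) = v₊ / (1 + (v₊ - 1)·exp(-s·v₊·x/μ)) for x > 0 satisfies the travelling-wave ODE s·v̄'(x) + μ·(ln v̄)''(x) = 0 on (0, ∞). -/
/-- The travelling-wave profile satisfies s·v̄' + μ·(ln v̄)'' = 0 on (0,∞). -/
theorem travelling_wave_ode (μ vp s : ℝ) (hμ : 0 < μ) (hvp : 1 < vp) (hs : 0 < s) :
    ∀ x > (0:ℝ),
      s * deriv (fun y => vp / (1 + (vp - 1) * Real.exp (-s * vp * y / μ))) x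
        + μ * deriv (deriv (fun y =>
            Real.log (vp / (1 + (vp - 1) * Real.exp (-s * vp * y / μ))))) x = 0 := by
  have hvp0 : (0:ℝ) < vp := lt_trans one_pos hvp
  have hc : (0:ℝ) < vp - 1 := by linarith
  -- derivative of the inner linear function
  have h1 : ∀ x : ℝ, HasDerivAt (fun y : ℝ => -s * vp * y / μ) (-s * vp / μ) x := by
    intro x
    simpa using ((hasDerivAt_id x).const_mul (-s * vp)).div_const μ
  have hE : ∀ x : ℝ, HasDerivAt (fun y : ℝ => Real.exp (-s * vp * y / μ))
      (Real.exp (-s * vp * x / μ) * (-s * vp / μ)) x := fun x => (h1 x).exp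
  have hD : ∀ x : ℝ, HasDerivAt (fun y : ℝ => 1 + (vp - 1) * Real.exp (-s * vp * y / μ))
      ((vp - 1) * (Real.exp (-s * vp * x / μ) * (-s * vp / μ))) x :=
    fun x => ((hE x).const_mul (vp - 1)).const_add 1
  have hDpos : ∀ x : ℝ, (0:ℝ) < 1 + (vp - 1) * Real.exp (-s * vp * x / μ) := by
    intro x
    positivity
  have hDne : ∀ x : ℝ, (1 + (vp - 1) * Real.exp (-s * vp * x / μ)) ≠ 0 :=
    fun x => (hDpos x).ne'
  -- first derivative of log ∘ v̄
  have hlog : deriv (fun y => Real.log (vp / (1 + (vp - 1) * Real.exp (-s * vp * y / μ))))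
      = fun x => -((vp - 1) * (Real.exp (-s * vp * x / μ) * (-s * vp / μ))
          / (1 + (vp - 1) * Real.exp (-s * vp * x / μ))) := by
    funext x
    have heq : (fun y => Real.log (vp / (1 + (vp - 1) * Real.exp (-s * vp * y / μ))))
        = fun y => Real.log vp - Real.log (1 + (vp - 1) * Real.exp (-s * vp * y / μ)) := by
      funext y
      rw [Real.log_div hvp0.ne' (hDne y)]
    rw [heq]
    have := ((hD x).log (hDne x)).const_sub (Real.log vp)
    simpa [div_eq_mul_inv, mul_comm, mul_assoc] using this.deriv
  intro x hx
  rw [hlog]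
  -- second derivative
  have hNum : HasDerivAt (fun y : ℝ => (vp - 1) * (Real.exp (-s * vp * y / μ) * (-s * vp / μ)))
      ((vp - 1) * ((Real.exp (-s * vp * x / μ) * (-s * vp / μ)) * (-s * vp / μ))) x := by
    have := ((hE x).mul_const (-s * vp / μ)).const_mul (vp - 1)
    simpa [mul_assoc] using this
  have hQ := (hNum.div (hD x) (hDne x)).neg
  have hsecond : deriv (fun x => -((vp - 1) * (Real.exp (-s * vp * x / μ) * (-s * vp / μ))
      / (1 + (vp - 1) * Real.exp (-s * vp * x / μ)))) x
      = -(((vp - 1) * ((Real.exp (-s * vp * x / μ) * (-s * vp / μ)) * (-s * vp / μ))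
            * (1 + (vp - 1) * Real.exp (-s * vp * x / μ))
          - (vp - 1) * (Real.exp (-s * vp * x / μ) * (-s * vp / μ))
            * ((vp - 1) * (Real.exp (-s * vp * x / μ) * (-s * vp / μ))))
        / (1 + (vp - 1) * Real.exp (-s * vp * x / μ)) ^ 2) := hQ.deriv
  rw [hsecond]
  -- first derivative of v̄
  have hv : deriv (fun y => vp / (1 + (vp - 1) * Real.exp (-s * vp * y / μ))) x
      = (0 * (1 + (vp - 1) * Real.exp (-s * vp * x / μ))
          - vp * ((vp - 1) * (Real.exp (-s * vp * x / μ) * (-s * vp / μ))))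
        / (1 + (vp - 1) * Real.exp (-s * vp * x / μ)) ^ 2 :=
    ((hasDerivAt_const x vp).div (hD x) (hDne x)).deriv
  rw [hv]
  field_simp [hDne x]
  ring
end

section
/- Coercivity of 𝒜∂ₓ: for every φ ∈ H²(ℝ₊) (say φ ∈ C²_c([0,∞)) or φ smooth with sufficient decay), ∫₀^∞ (𝒜∂ₓφ)·φ dx = μ·∫₀^∞ (φ'(x))²/v̄(x) dx + (s/2)·φ(0)² + μ·φ'(0)·φ(0), where 𝒜ψ := -s·ψ - μ·(ψ/v̄)'. In particular ∫₀^∞ (𝒜∂ₓφ)·φ dx ≥ (μ/v₊)·∫₀^∞ (φ')² + (s/2)·φ(0)² + μ·φ'(0)·φ(0). -/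
open MeasureTheory Set Filter Real Function

/-- Coercivity of 𝒜∂ₓ: exact identity, and lower bound, for the quadratic form. -/
theorem coercivity_A_dx (μ vp s : ℝ) (hμ : 0 < μ) (hvp : 1 < vp) (hs : 0 < s)
    (vb : ℝ → ℝ) (hvb : ∀ x, vb x = vp / (1 + (vp - 1) * Real.exp (-s * vp * x / μ)))
    (φ : ℝ → ℝ) (hφ : ContDiff ℝ 2 φ) (hsupp : HasCompactSupport φ) :
    (∫ x in Set.Ioi (0:ℝ),
        (-s * deriv φ x - μ * deriv (fun y => deriv φ y / vb y) x) * φ x)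
      = μ * (∫ x in Set.Ioi (0:ℝ), (deriv φ x) ^ 2 / vb x)
          + (s / 2) * (φ 0) ^ 2 + μ * deriv φ 0 * φ 0
    ∧ (∫ x in Set.Ioi (0:ℝ),
        (-s * deriv φ x - μ * deriv (fun y => deriv φ y / vb y) x) * φ x)
      ≥ (μ / vp) * (∫ x in Set.Ioi (0:ℝ), (deriv φ x) ^ 2)
          + (s / 2) * (φ 0) ^ 2 + μ * deriv φ 0 * φ 0 := by
  have hvp0 : (0:ℝ) < vp := lt_trans one_pos hvp
  set D : ℝ → ℝ := fun x => 1 + (vp - 1) * Real.exp (-s * vp * x / μ) with hD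
  have hD1 : ∀ x, 1 ≤ D x := by
    intro x
    have h0 : 0 ≤ (vp - 1) * Real.exp (-s * vp * x / μ) :=
      mul_nonneg (by linarith) (Real.exp_pos _).le
    show (1:ℝ) ≤ 1 + (vp - 1) * Real.exp (-s * vp * x / μ)
    linarith
  have hD0 : ∀ x, D x ≠ 0 := fun x => by have := hD1 x; positivity
  have hvb_eq : vb = fun x => vp / D x := funext hvb
  have hvb_pos : ∀ x, 0 < vb x := by
    intro x; rw [hvb x]; have := hD1 x; positivity
  have hvb_ne : ∀ x, vb x ≠ 0 := fun x => (hvb_pos x).ne'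
  have hvb_le : ∀ x, vb x ≤ vp := by
    intro x; rw [hvb x]
    calc vp / D x ≤ vp / 1 := div_le_div_of_nonneg_left hvp0.le one_pos (hD1 x)
      _ = vp := div_one vp
  have hvb0 : vb 0 = 1 := by
    have e0 : -s * vp * (0:ℝ) / μ = 0 := by ring
    have e1 : 1 + (vp - 1) = vp := by ring
    rw [hvb 0, e0, Real.exp_zero, mul_one, e1, div_self hvp0.ne']
  have hDcd : ContDiff ℝ 2 D := by
    apply contDiff_const.add
    apply contDiff_const.mul
    exact Real.contDiff_exp.comp ((contDiff_const.mul contDiff_id).div_const μ)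
  have hvbcd : ContDiff ℝ 2 vb := by
    rw [hvb_eq]; exact contDiff_const.div hDcd hD0
  have hφd : Differentiable ℝ φ := hφ.differentiable (by norm_num)
  have hφ'cd : ContDiff ℝ 1 (deriv φ) := by
    have h2 : ContDiff ℝ ((1:ℕ) + 1) φ := by exact_mod_cast hφ
    exact (contDiff_succ_iff_deriv.mp (by exact_mod_cast h2)).2.2
  set g : ℝ → ℝ := fun y => deriv φ y / vb y with hg
  have hgcd : ContDiff ℝ 1 g := hφ'cd.div (hvbcd.of_le (by norm_num)) hvb_ne
  have hgd : Differentiable ℝ g := hgcd.differentiable one_ne_zero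
  have hg'cont : Continuous (deriv g) := hgcd.continuous_deriv le_rfl
  have hφcont : Continuous φ := hφ.continuous
  have hφ'cont : Continuous (deriv φ) := hφ'cd.continuous
  have hgcont : Continuous g := hgcd.continuous
  -- vanishing outside tsupport φ
  have hts : ∀ x, x ∉ tsupport φ →
      φ x = 0 ∧ deriv φ x = 0 ∧ g x = 0 ∧ deriv g x = 0 := by
    intro x hx
    have h1 : φ x = 0 := image_eq_zero_of_notMem_tsupport hx
    have h2 : deriv φ x = 0 := by
      by_contra h; exact hx (support_deriv_subset h)
    have h3 : g x = 0 := by simp [hg, h2]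
    have hsubg : tsupport g ⊆ tsupport φ := by
      apply closure_minimal _ (isClosed_tsupport φ)
      intro y hy
      have : deriv φ y ≠ 0 := by
        intro h0; exact hy (by simp [hg, h0])
      exact support_deriv_subset this
    have h4 : deriv g x = 0 := by
      by_contra h; exact hx (hsubg (support_deriv_subset h))
    exact ⟨h1, h2, h3, h4⟩
  set F : ℝ → ℝ := fun x => -(s/2) * φ x ^ 2 - μ * (g x * φ x) with hF
  set F' : ℝ → ℝ := fun x =>
    -(s/2) * ((2:ℕ) * φ x ^ 1 * deriv φ x) - μ * (deriv g x * φ x + g x * deriv φ x) with hF'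
  have hFd : ∀ x, HasDerivAt F (F' x) x := fun x =>
    (((hφd x).hasDerivAt.pow 2).const_mul (-(s/2))).sub
      ((((hgd x).hasDerivAt).mul (hφd x).hasDerivAt).const_mul μ)
  have hGeq : ∀ x, (-s * deriv φ x - μ * deriv g x) * φ x
      = F' x + μ * ((deriv φ x) ^ 2 / vb x) := by
    intro x
    have hne := hvb_ne x
    simp only [hF', hg]
    field_simp
    ring
  have hFcont : Continuous F :=
    (continuous_const.mul (hφcont.pow 2)).sub (continuous_const.mul (hgcont.mul hφcont))
  have hF'cont : Continuous F' := by
    apply Continuous.sub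
    · exact continuous_const.mul ((continuous_const.mul (hφcont.pow 1)).mul hφ'cont)
    · exact continuous_const.mul ((hg'cont.mul hφcont).add (hgcont.mul hφ'cont))
  have hFsupp : HasCompactSupport F := by
    apply hsupp.mono'
    intro x hx
    by_contra hxn
    obtain ⟨h1, h2, h3, h4⟩ := hts x hxn
    exact hx (by simp [hF, h1, h3])
  have hF'supp : HasCompactSupport F' := by
    apply hsupp.mono'
    intro x hx
    by_contra hxn
    obtain ⟨h1, h2, h3, h4⟩ := hts x hxn
    exact hx (by simp [hF', h1, h2, h3, h4])
  have hF'int : IntegrableOn F' (Ioi (0:ℝ)) :=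
    (hF'cont.integrable_of_hasCompactSupport hF'supp).integrableOn
  have hhcont : Continuous fun x => (deriv φ x) ^ 2 / vb x :=
    (hφ'cont.pow 2).div hvbcd.continuous hvb_ne
  have hhsupp : HasCompactSupport fun x => (deriv φ x) ^ 2 / vb x := by
    apply hsupp.mono'
    intro x hx
    by_contra hxn
    obtain ⟨h1, h2, h3, h4⟩ := hts x hxn
    exact hx (by simp [h2])
  have hhint : IntegrableOn (fun x => (deriv φ x) ^ 2 / vb x) (Ioi (0:ℝ)) :=
    (hhcont.integrable_of_hasCompactSupport hhsupp).integrableOn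
  have hh2supp : HasCompactSupport fun x => (deriv φ x) ^ 2 := by
    apply hsupp.mono'
    intro x hx
    by_contra hxn
    obtain ⟨h1, h2, h3, h4⟩ := hts x hxn
    exact hx (by simp [h2])
  have hh2int : IntegrableOn (fun x => (deriv φ x) ^ 2) (Ioi (0:ℝ)) :=
    ((hφ'cont.pow 2).integrable_of_hasCompactSupport hh2supp).integrableOn
  have hFTC : ∫ x in Ioi (0:ℝ), F' x = 0 - F 0 := by
    apply integral_Ioi_of_hasDerivAt_of_tendsto hFcont.continuousWithinAt
      (fun x _ => hFd x) hF'int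
    exact (hFsupp.is_zero_at_infty).mono_left _root_.atTop_le_cocompact
  have hF0 : F 0 = -(s/2) * φ 0 ^ 2 - μ * (deriv φ 0 * φ 0) := by
    simp [hF, hg, hvb0]
  have key : (∫ x in Set.Ioi (0:ℝ),
        (-s * deriv φ x - μ * deriv (fun y => deriv φ y / vb y) x) * φ x)
      = μ * (∫ x in Set.Ioi (0:ℝ), (deriv φ x) ^ 2 / vb x)
          + (s / 2) * (φ 0) ^ 2 + μ * deriv φ 0 * φ 0 := by
    have hfun : (fun x => (-s * deriv φ x - μ * deriv (fun y => deriv φ y / vb y) x) * φ x)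
        = fun x => F' x + μ * ((deriv φ x) ^ 2 / vb x) := funext fun x => hGeq x
    rw [hfun, MeasureTheory.integral_add hF'int (hhint.const_mul μ),
      MeasureTheory.integral_const_mul, hFTC, hF0]
    ring
  refine ⟨key, ?_⟩
  rw [key]
  have hmono : (μ / vp) * (∫ x in Set.Ioi (0:ℝ), (deriv φ x) ^ 2)
      ≤ μ * (∫ x in Set.Ioi (0:ℝ), (deriv φ x) ^ 2 / vb x) := by
    have h1 : (μ / vp) * (∫ x in Set.Ioi (0:ℝ), (deriv φ x) ^ 2)
        = μ * ∫ x in Set.Ioi (0:ℝ), (deriv φ x) ^ 2 / vp := by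
      rw [MeasureTheory.integral_div]; ring
    rw [h1]
    apply mul_le_mul_of_nonneg_left _ hμ.le
    apply MeasureTheory.setIntegral_mono_on (hh2int.div_const vp) hhint measurableSet_Ioi
    intro x _
    exact div_le_div_of_nonneg_left (sq_nonneg _) (hvb_pos x) (hvb_le x)
  linarith
end

section
/- Weighted change-of-variables estimate: if F ∈ L²(ℝ₊) with √x·F ∈ L²(ℝ₊), M ≥ 1, and ỹ ∈ L^∞([0,T]) satisfies ỹ(t) ≥ t/M for a.e. t, then for all T > 0 and R > 0, ∫₀^T ∫₀^R F(x + ỹ(t))² dx dt ≤ M·∫₀^∞ z·F(z)² dz. -/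
open MeasureTheory

/-- Weighted change-of-variables estimate. -/
theorem weighted_change_of_variables (F : ℝ → ℝ) (hF : Measurable F)
    (M : ℝ) (hM : 1 ≤ M) (T R : ℝ) (hT : 0 < T) (hR : 0 < R)
    (y : ℝ → ℝ) (hy_meas : Measurable y)
    (hy : ∀ᵐ t ∂(volume.restrict (Set.Ioc (0:ℝ) T)), t / M ≤ y t) :
    ∫⁻ t in Set.Ioc (0:ℝ) T, ∫⁻ x in Set.Ioc (0:ℝ) R,
        ENNReal.ofReal ((F (x + y t)) ^ 2)
      ≤ ENNReal.ofReal M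
          * ∫⁻ z in Set.Ioi (0:ℝ), ENNReal.ofReal (z * (F z) ^ 2) := by
  have hM0 : (0:ℝ) < M := lt_of_lt_of_le one_pos hM
  set G : ℝ → ENNReal := fun z => ENNReal.ofReal (F z ^ 2) with hGdef
  have hGm : Measurable G := (hF.pow_const 2).ennreal_ofReal
  set f : ℝ × ℝ → ENNReal :=
    fun p => Set.indicator {q : ℝ × ℝ | y q.1 < q.2} (fun q => G q.2) p with hfdef
  have hfm : Measurable f := by
    apply Measurable.indicator (hGm.comp measurable_snd)
    exact measurableSet_lt (hy_meas.comp measurable_fst) measurable_snd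
  have key : ∀ᵐ t ∂(volume.restrict (Set.Ioc (0:ℝ) T)),
      (∫⁻ x in Set.Ioc (0:ℝ) R, G (x + y t)) ≤ ∫⁻ z, f (t, z) := by
    filter_upwards [hy, ae_restrict_mem measurableSet_Ioc] with t hyt ht
    have h1 : (∫⁻ x in Set.Ioc (0:ℝ) R, G (x + y t))
        = ∫⁻ z in Set.Ioc (y t) (y t + R), G z := by
      have hpre : Set.Ioc (0:ℝ) R = (fun x => x + y t) ⁻¹' Set.Ioc (y t) (y t + R) := by
        ext x
        simp only [Set.mem_preimage, Set.mem_Ioc]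
        constructor <;> rintro ⟨ha, hb⟩ <;> constructor <;> linarith
      rw [hpre]
      exact (measurePreserving_add_right volume (y t)).setLIntegral_comp_preimage_emb
        (measurableEmbedding_addRight (y t)) G _
    rw [h1, ← lintegral_indicator measurableSet_Ioc _]
    refine lintegral_mono fun z => ?_
    simp only [hfdef, Set.indicator_apply, Set.mem_setOf_eq, Set.mem_Ioc]
    by_cases hz : y t < z ∧ z ≤ y t + R
    · rw [if_pos hz, if_pos hz.1]
    · rw [if_neg hz]; exact zero_le
  have hzmeas : ∀ z : ℝ, MeasurableSet {t : ℝ | y t < z} := fun z =>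
    hy_meas measurableSet_Iio
  calc ∫⁻ t in Set.Ioc (0:ℝ) T, ∫⁻ x in Set.Ioc (0:ℝ) R,
        ENNReal.ofReal ((F (x + y t)) ^ 2)
      ≤ ∫⁻ t in Set.Ioc (0:ℝ) T, ∫⁻ z, f (t, z) := lintegral_mono_ae key
    _ = ∫⁻ z, ∫⁻ t in Set.Ioc (0:ℝ) T, f (t, z) :=
        lintegral_lintegral_swap hfm.aemeasurable
    _ ≤ ∫⁻ z, G z * ENNReal.ofReal (M * z) := by
        refine lintegral_mono fun z => ?_
        have heq : (fun t => f (t, z)) = Set.indicator {t : ℝ | y t < z} (fun _ => G z) := by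
          funext t
          simp only [hfdef, Set.indicator_apply, Set.mem_setOf_eq]
        have h2 : (∫⁻ t in Set.Ioc (0:ℝ) T, f (t, z))
            = G z * (volume.restrict (Set.Ioc (0:ℝ) T)) {t : ℝ | y t < z} := by
          calc (∫⁻ t in Set.Ioc (0:ℝ) T, f (t, z))
              = ∫⁻ t in Set.Ioc (0:ℝ) T,
                  Set.indicator {t : ℝ | y t < z} (fun _ => G z) t := by rw [heq]
            _ = G z * (volume.restrict (Set.Ioc (0:ℝ) T)) {t : ℝ | y t < z} :=
                lintegral_indicator_const (hzmeas z) _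
        have hmeasle : (volume.restrict (Set.Ioc (0:ℝ) T)) {t : ℝ | y t < z}
            ≤ ENNReal.ofReal (M * z) := by
          have hsub : {t : ℝ | y t < z} ≤ᵐ[volume.restrict (Set.Ioc (0:ℝ) T)]
              Set.Ioc (0:ℝ) (M * z) := by
            filter_upwards [hy, ae_restrict_mem measurableSet_Ioc] with t hyt ht hlt
            refine ⟨ht.1, le_of_lt ?_⟩
            have : t / M < z := lt_of_le_of_lt hyt hlt
            calc t = M * (t / M) := by field_simp
              _ < M * z := by exact (mul_lt_mul_iff_right₀ hM0).mpr this
          calc (volume.restrict (Set.Ioc (0:ℝ) T)) {t : ℝ | y t < z}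
              ≤ (volume.restrict (Set.Ioc (0:ℝ) T)) (Set.Ioc (0:ℝ) (M * z)) :=
                measure_mono_ae hsub
            _ ≤ volume (Set.Ioc (0:ℝ) (M * z)) := Measure.restrict_le_self _
            _ = ENNReal.ofReal (M * z - 0) := Real.volume_Ioc
            _ ≤ ENNReal.ofReal (M * z) := by rw [sub_zero]
        rw [h2]
        exact mul_le_mul_right hmeasle _
    _ = ∫⁻ z, ENNReal.ofReal M * ENNReal.ofReal (z * F z ^ 2) := by
        refine lintegral_congr fun z => ?_
        rcases le_or_gt 0 z with hz | hz
        · rw [hGdef]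
          rw [← ENNReal.ofReal_mul (sq_nonneg (F z)), ← ENNReal.ofReal_mul hM0.le]
          congr 1; ring
        · have h1 : ENNReal.ofReal (M * z) = 0 :=
            ENNReal.ofReal_eq_zero.mpr (mul_nonpos_of_nonneg_of_nonpos hM0.le hz.le)
          have h2 : ENNReal.ofReal (z * F z ^ 2) = 0 :=
            ENNReal.ofReal_eq_zero.mpr (mul_nonpos_of_nonpos_of_nonneg hz.le (sq_nonneg _))
          rw [h1, h2, mul_zero, mul_zero]
    _ = ENNReal.ofReal M * ∫⁻ z, ENNReal.ofReal (z * F z ^ 2) :=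
        lintegral_const_mul _ ((measurable_id.mul (hF.pow_const 2)).ennreal_ofReal)
    _ = ENNReal.ofReal M * ∫⁻ z in Set.Ioi (0:ℝ), ENNReal.ofReal (z * (F z) ^ 2) := by
        congr 1
        rw [← lintegral_indicator measurableSet_Ioi _]
        refine lintegral_congr fun z => ?_
        by_cases hz : z ∈ Set.Ioi (0:ℝ)
        · rw [Set.indicator_of_mem hz]
        · rw [Set.indicator_of_notMem hz]
          exact ENNReal.ofReal_eq_zero.mpr
            (mul_nonpos_of_nonpos_of_nonneg (not_lt.mp hz) (sq_nonneg _))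
end

section
/- Taylor-type L² comparison estimate: let ỹ₁, ỹ₂ be locally bounded on [0,T] with derivatives in L² ∩ L^∞(0,T), ỹ₁(0) = ỹ₂(0) = 0, and M⁻¹ ≤ ỹᵢ'(t) ≤ M a.e. for some M ≥ 1. If w⁰ ∈ W^{1,∞}(ℝ₊) with √x·∂ₓw⁰ ∈ L²(ℝ₊), then ‖w⁰(ỹ₁(·)) - w⁰(ỹ₂(·))‖_{L²(0,T)} ≤ C·‖ỹ₁' - ỹ₂'‖_{L²(0,T)}·‖√z·∂ₓw⁰(z)‖_{L²(ℝ₊)}, where C depends only on M. -/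
open MeasureTheory

set_option maxHeartbeats 1000000

open Set

section helpers

/-- Cauchy–Schwarz: square of set integral is bounded by measure times integral of square. -/
lemma sq_setIntegral_le {s : Set ℝ} {c : ℝ} (hc : 0 < c)
    (hvol : volume s = ENNReal.ofReal c) {f : ℝ → ℝ}
    (hf : IntegrableOn f s) (hf2 : IntegrableOn (fun x => f x ^ 2) s) :
    (∫ x in s, f x) ^ 2 ≤ c * ∫ x in s, f x ^ 2 := by
  set J := ∫ x in s, f x with hJ
  have hfin : volume s ≠ ⊤ := by rw [hvol]; exact ENNReal.ofReal_ne_top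
  have hconst : IntegrableOn (fun _ : ℝ => (J / c) ^ 2) s := integrableOn_const hfin
  have hmul : IntegrableOn (fun x => 2 * (J / c) * f x) s := hf.const_mul _
  have key : 0 ≤ ∫ x in s, (f x - J / c) ^ 2 :=
    integral_nonneg fun x => sq_nonneg _
  have expand : ∫ x in s, (f x - J / c) ^ 2
      = (∫ x in s, f x ^ 2) - 2 * (J / c) * J + (J / c) ^ 2 * c := by
    have h1 : ∀ x : ℝ, (f x - J / c) ^ 2 = (f x ^ 2 - 2 * (J / c) * f x) + (J / c) ^ 2 := by
      intro x; ring
    simp_rw [h1]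
    have hsub : IntegrableOn (fun x => f x ^ 2 - 2 * (J / c) * f x) s := hf2.sub hmul
    rw [integral_add hsub hconst, integral_sub hf2 hmul, integral_const_mul, integral_const]
    have : (volume s).toReal = c := by rw [hvol, ENNReal.toReal_ofReal hc.le]
    rw [Measure.real, Measure.restrict_apply_univ, this, smul_eq_mul]
    field_simp
    rw [← hJ]; ring
  rw [expand] at key
  have hcJ : J / c * c = J := div_mul_cancel₀ _ hc.ne'
  nlinarith [key, sq_nonneg (J / c), hc]

/-- Linear growth bounds for a function with bounded derivative on `[0,T]`. -/
lemma growth_bounds {M T : ℝ} {y : ℝ → ℝ}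
    (hd : Differentiable ℝ y) (h0 : y 0 = 0)
    (hb : ∀ t ∈ Icc (0:ℝ) T, M⁻¹ ≤ deriv y t ∧ deriv y t ≤ M) :
    ∀ t ∈ Icc (0:ℝ) T, M⁻¹ * t ≤ y t ∧ y t ≤ M * t := by
  intro t ht
  have h0T : (0:ℝ) ∈ Icc (0:ℝ) T := ⟨le_refl 0, le_trans ht.1 ht.2⟩
  have hder₁ : ∀ x : ℝ, HasDerivAt (fun s => y s - M⁻¹ * s) (deriv y x - M⁻¹) x := by
    intro x
    exact ((hd x).hasDerivAt.sub ((hasDerivAt_id x).const_mul M⁻¹)).congr_deriv (by simp)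
  have hder₂ : ∀ x : ℝ, HasDerivAt (fun s => M * s - y s) (M - deriv y x) x := by
    intro x
    exact (((hasDerivAt_id x).const_mul M).sub (hd x).hasDerivAt).congr_deriv (by simp)
  constructor
  · have hmono : MonotoneOn (fun s => y s - M⁻¹ * s) (Icc (0:ℝ) T) := by
      apply monotoneOn_of_deriv_nonneg (convex_Icc 0 T)
        (fun x _ => ((hder₁ x).differentiableAt.continuousAt).continuousWithinAt)
        (fun x _ => (hder₁ x).differentiableAt.differentiableWithinAt)
      intro x hx
      rw [interior_Icc] at hx
      rw [(hder₁ x).deriv]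
      linarith [(hb x (Ioo_subset_Icc_self hx)).1]
    have := hmono h0T ht ht.1
    simp only [h0, mul_zero, sub_zero] at this
    linarith
  · have hmono : MonotoneOn (fun s => M * s - y s) (Icc (0:ℝ) T) := by
      apply monotoneOn_of_deriv_nonneg (convex_Icc 0 T)
        (fun x _ => ((hder₂ x).differentiableAt.continuousAt).continuousWithinAt)
        (fun x _ => (hder₂ x).differentiableAt.differentiableWithinAt)
      intro x hx
      rw [interior_Icc] at hx
      rw [(hder₂ x).deriv]
      linarith [(hb x (Ioo_subset_Icc_self hx)).2]
    have := hmono h0T ht ht.1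
    simp only [h0, mul_zero, sub_zero] at this
    linarith

end helpers



/-- Taylor-type L² comparison estimate, with constant depending only on M. -/
theorem taylor_L2_comparison (M : ℝ) (hM : 1 ≤ M) :
    ∃ C > (0:ℝ), ∀ (T : ℝ), 0 < T → ∀ (y₁ y₂ : ℝ → ℝ),
      Differentiable ℝ y₁ → Differentiable ℝ y₂ →
      y₁ 0 = 0 → y₂ 0 = 0 →
      (∀ t ∈ Set.Icc (0:ℝ) T, M⁻¹ ≤ deriv y₁ t ∧ deriv y₁ t ≤ M) →
      (∀ t ∈ Set.Icc (0:ℝ) T, M⁻¹ ≤ deriv y₂ t ∧ deriv y₂ t ≤ M) →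
      ∀ (w : ℝ → ℝ) (K : ℝ), Differentiable ℝ w →
      (∀ z, |deriv w z| ≤ K) →
      IntegrableOn (fun z => z * (deriv w z) ^ 2) (Set.Ioi 0) →
      Real.sqrt (∫ t in Set.Ioc (0:ℝ) T, (w (y₁ t) - w (y₂ t)) ^ 2)
        ≤ C * Real.sqrt (∫ t in Set.Ioc (0:ℝ) T, (deriv y₁ t - deriv y₂ t) ^ 2)
            * Real.sqrt (∫ z in Set.Ioi (0:ℝ), z * (deriv w z) ^ 2) := by
  refine ⟨M, lt_of_lt_of_le one_pos hM, ?_⟩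
  intro T hT y₁ y₂ hd₁ hd₂ h10 h20 hb₁ hb₂ w K hw hK hGint
  have hM0 : (0:ℝ) < M := lt_of_lt_of_le one_pos hM
  have hMinv : (0:ℝ) < M⁻¹ := inv_pos.mpr hM0
  have hK0 : (0:ℝ) ≤ K := le_trans (abs_nonneg _) (hK 0)
  -- abbreviations
  set B : ℝ := ∫ t in Ioc (0:ℝ) T, (deriv y₁ t - deriv y₂ t) ^ 2 with hBdef
  set I : ℝ := ∫ z in Ioi (0:ℝ), z * (deriv w z) ^ 2 with hIdef
  have hBnn : 0 ≤ B := integral_nonneg fun t => sq_nonneg _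
  have hInn : 0 ≤ I := setIntegral_nonneg measurableSet_Ioi
    (fun z hz => mul_nonneg (le_of_lt hz) (sq_nonneg _))
  -- measurability
  have hmw : Measurable (deriv w) := measurable_deriv w
  have hm1 : Measurable (deriv y₁) := measurable_deriv y₁
  have hm2 : Measurable (deriv y₂) := measurable_deriv y₂
  -- growth bounds for y₁, y₂
  have hgr₁ := growth_bounds hd₁ h10 hb₁
  have hgr₂ := growth_bounds hd₂ h20 hb₂
  -- bounds for the convex interpolation and its derivative
  have hya : ∀ t ∈ Icc (0:ℝ) T, ∀ θ ∈ Icc (0:ℝ) 1,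
      M⁻¹ * t ≤ y₂ t + θ * (y₁ t - y₂ t) ∧ y₂ t + θ * (y₁ t - y₂ t) ≤ M * t := by
    intro t ht θ hθ
    have h₁ := hgr₁ t ht
    have h₂ := hgr₂ t ht
    constructor
    · nlinarith [mul_nonneg (sub_nonneg.2 hθ.2) (sub_nonneg.2 h₂.1),
        mul_nonneg hθ.1 (sub_nonneg.2 h₁.1)]
    · nlinarith [mul_nonneg (sub_nonneg.2 hθ.2) (sub_nonneg.2 h₂.2),
        mul_nonneg hθ.1 (sub_nonneg.2 h₁.2)]
  have hp : ∀ t ∈ Icc (0:ℝ) T, ∀ θ ∈ Icc (0:ℝ) 1,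
      M⁻¹ ≤ deriv y₂ t + θ * (deriv y₁ t - deriv y₂ t) ∧
        deriv y₂ t + θ * (deriv y₁ t - deriv y₂ t) ≤ M := by
    intro t ht θ hθ
    have h₁ := hb₁ t ht
    have h₂ := hb₂ t ht
    constructor
    · nlinarith [mul_nonneg (sub_nonneg.2 hθ.2) (sub_nonneg.2 h₂.1),
        mul_nonneg hθ.1 (sub_nonneg.2 h₁.1)]
    · nlinarith [mul_nonneg (sub_nonneg.2 hθ.2) (sub_nonneg.2 h₂.2),
        mul_nonneg hθ.1 (sub_nonneg.2 h₁.2)]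
  -- derivative difference bound
  have habsg : ∀ s ∈ Icc (0:ℝ) T, |deriv y₁ s - deriv y₂ s| ≤ M := by
    intro s hs
    have h₁ := hb₁ s hs
    have h₂ := hb₂ s hs
    rw [abs_le]
    constructor <;> nlinarith
  -- integrability of (deriv y₁ - deriv y₂)^2 on Ioc 0 T
  have hgB : IntegrableOn (fun s => (deriv y₁ s - deriv y₂ s) ^ 2) (Ioc (0:ℝ) T) := by
    apply Measure.integrableOn_of_bounded (M := M ^ 2) measure_Ioc_lt_top.ne
      ((hm1.sub hm2).pow_const 2).aestronglyMeasurable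
    filter_upwards [ae_restrict_mem measurableSet_Ioc] with s hs
    rw [Real.norm_eq_abs, abs_pow]
    exact pow_le_pow_left₀ (abs_nonneg _) (habsg s (Ioc_subset_Icc_self hs)) 2
  -- difference bound : (y₁ t - y₂ t)^2 ≤ t * B
  have hdiff : ∀ t ∈ Ioc (0:ℝ) T, (y₁ t - y₂ t) ^ 2 ≤ t * B := by
    intro t ht
    have htT : Ioc (0:ℝ) t ⊆ Icc (0:ℝ) T := fun s hs =>
      ⟨le_of_lt hs.1, le_trans hs.2 ht.2⟩
    have hgint : IntegrableOn (fun s => deriv y₁ s - deriv y₂ s) (Ioc (0:ℝ) t) := by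
      apply Measure.integrableOn_of_bounded (M := M) measure_Ioc_lt_top.ne
        (hm1.sub hm2).aestronglyMeasurable
      filter_upwards [ae_restrict_mem measurableSet_Ioc] with s hs
      exact habsg s (htT hs)
    have hg2int : IntegrableOn (fun s => (deriv y₁ s - deriv y₂ s) ^ 2) (Ioc (0:ℝ) t) := by
      apply Measure.integrableOn_of_bounded (M := M ^ 2) measure_Ioc_lt_top.ne
        ((hm1.sub hm2).pow_const 2).aestronglyMeasurable
      filter_upwards [ae_restrict_mem measurableSet_Ioc] with s hs
      rw [Real.norm_eq_abs, abs_pow]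
      exact pow_le_pow_left₀ (abs_nonneg _) (habsg s (htT hs)) 2
    have ftc : y₁ t - y₂ t = ∫ s in Ioc (0:ℝ) t, (deriv y₁ s - deriv y₂ s) := by
      have hh := intervalIntegral.integral_eq_sub_of_hasDerivAt
        (f := fun s => y₁ s - y₂ s) (f' := fun s => deriv y₁ s - deriv y₂ s)
        (a := 0) (b := t)
        (fun s _ => ((hd₁ s).hasDerivAt.sub (hd₂ s).hasDerivAt))
        ((intervalIntegrable_iff_integrableOn_Ioc_of_le (le_of_lt ht.1)).2 hgint)
      rw [intervalIntegral.integral_of_le (le_of_lt ht.1)] at hh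
      simp only [h10, h20, sub_zero] at hh
      exact hh.symm
    rw [ftc]
    calc (∫ s in Ioc (0:ℝ) t, (deriv y₁ s - deriv y₂ s)) ^ 2
        ≤ t * ∫ s in Ioc (0:ℝ) t, (deriv y₁ s - deriv y₂ s) ^ 2 := by
          apply sq_setIntegral_le ht.1 _ hgint hg2int
          rw [Real.volume_Ioc, sub_zero]
      _ ≤ t * B := by
          apply mul_le_mul_of_nonneg_left _ (le_of_lt ht.1)
          apply setIntegral_mono_set hgB
          · filter_upwards [ae_restrict_mem measurableSet_Ioc] with s _
            exact sq_nonneg _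
          · exact HasSubset.Subset.eventuallyLE (Ioc_subset_Ioc_right ht.2)
  -- FTC in the interpolation parameter θ
  have hftc : ∀ t : ℝ, w (y₁ t) - w (y₂ t)
      = ∫ θ in Ioc (0:ℝ) 1, deriv w (y₂ t + θ * (y₁ t - y₂ t)) * (y₁ t - y₂ t) := by
    intro t
    have hder : ∀ θ : ℝ, HasDerivAt (fun θ : ℝ => w (y₂ t + θ * (y₁ t - y₂ t)))
        (deriv w (y₂ t + θ * (y₁ t - y₂ t)) * (y₁ t - y₂ t)) θ := by
      intro θ
      have hinner : HasDerivAt (fun θ : ℝ => y₂ t + θ * (y₁ t - y₂ t)) (y₁ t - y₂ t) θ := by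
        simpa using ((hasDerivAt_id θ).mul_const (y₁ t - y₂ t)).const_add (y₂ t)
      exact (hw _).hasDerivAt.comp θ hinner
    have hqint : IntervalIntegrable
        (fun θ : ℝ => deriv w (y₂ t + θ * (y₁ t - y₂ t)) * (y₁ t - y₂ t)) volume 0 1 := by
      rw [intervalIntegrable_iff_integrableOn_Ioc_of_le zero_le_one]
      have hmθ : Measurable fun θ : ℝ => deriv w (y₂ t + θ * (y₁ t - y₂ t)) * (y₁ t - y₂ t) :=
        (hmw.comp (measurable_const.add (measurable_id'.mul_const _))).mul_const _
      apply Measure.integrableOn_of_bounded (M := K * |y₁ t - y₂ t|) measure_Ioc_lt_top.ne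
        hmθ.aestronglyMeasurable
      apply ae_of_all
      intro θ
      rw [Real.norm_eq_abs, abs_mul]
      exact mul_le_mul_of_nonneg_right (hK _) (abs_nonneg _)
    have hh := intervalIntegral.integral_eq_sub_of_hasDerivAt (fun θ _ => hder θ) hqint
    rw [intervalIntegral.integral_of_le zero_le_one] at hh
    rw [hh]
    show _ = w (y₂ t + 1 * (y₁ t - y₂ t)) - w (y₂ t + 0 * (y₁ t - y₂ t))
    rw [show y₂ t + 1 * (y₁ t - y₂ t) = y₁ t by ring,
      show y₂ t + 0 * (y₁ t - y₂ t) = y₂ t by ring]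
  -- the product function
  set F : ℝ × ℝ → ℝ := fun z =>
    (y₂ z.1 + z.2 * (y₁ z.1 - y₂ z.1)) * deriv w (y₂ z.1 + z.2 * (y₁ z.1 - y₂ z.1)) ^ 2
      * (deriv y₂ z.1 + z.2 * (deriv y₁ z.1 - deriv y₂ z.1)) with hFdef
  have hFmeas : Measurable F := by
    have hya_meas : Measurable fun z : ℝ × ℝ => y₂ z.1 + z.2 * (y₁ z.1 - y₂ z.1) := by
      have : Continuous fun z : ℝ × ℝ => y₂ z.1 + z.2 * (y₁ z.1 - y₂ z.1) :=
        (hd₂.continuous.comp continuous_fst).add (continuous_snd.mul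
          ((hd₁.continuous.comp continuous_fst).sub (hd₂.continuous.comp continuous_fst)))
      exact this.measurable
    exact ((hya_meas.mul (((hmw.comp hya_meas)).pow_const 2)).mul
      ((hm2.comp measurable_fst).add
        (measurable_snd.mul ((hm1.sub hm2).comp measurable_fst))))
  have hFbound : ∀ t ∈ Icc (0:ℝ) T, ∀ θ ∈ Icc (0:ℝ) 1, |F (t, θ)| ≤ M * T * K ^ 2 * M := by
    intro t ht θ hθ
    have h1 := hya t ht θ hθ
    have h2 := hp t ht θ hθ
    have hya0 : 0 ≤ y₂ t + θ * (y₁ t - y₂ t) := le_trans (mul_nonneg hMinv.le ht.1) h1.1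
    have hp0 : 0 ≤ deriv y₂ t + θ * (deriv y₁ t - deriv y₂ t) := le_trans hMinv.le h2.1
    have hdw2 : deriv w (y₂ t + θ * (y₁ t - y₂ t)) ^ 2 ≤ K ^ 2 := by
      rw [← sq_abs]
      exact pow_le_pow_left₀ (abs_nonneg _) (hK _) 2
    have hyaT : y₂ t + θ * (y₁ t - y₂ t) ≤ M * T :=
      le_trans h1.2 (mul_le_mul_of_nonneg_left ht.2 hM0.le)
    have hF0 : 0 ≤ F (t, θ) := by
      simp only [hFdef]
      exact mul_nonneg (mul_nonneg hya0 (sq_nonneg _)) hp0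
    rw [abs_of_nonneg hF0]
    simp only [hFdef]
    apply mul_le_mul _ h2.2 hp0 (by positivity)
    exact mul_le_mul hyaT hdw2 (sq_nonneg _) (by positivity)
  -- instances and joint integrability
  haveI hfm1 : IsFiniteMeasure (volume.restrict (Ioc (0:ℝ) T)) :=
    ⟨by rw [Measure.restrict_apply_univ]; exact measure_Ioc_lt_top⟩
  haveI hfm2 : IsFiniteMeasure (volume.restrict (Ioc (0:ℝ) 1)) :=
    ⟨by rw [Measure.restrict_apply_univ]; exact measure_Ioc_lt_top⟩
  have hFint : Integrable F
      ((volume.restrict (Ioc (0:ℝ) T)).prod (volume.restrict (Ioc (0:ℝ) 1))) := by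
    apply Integrable.mono' (integrable_const (M * T * K ^ 2 * M)) hFmeas.aestronglyMeasurable
    rw [Measure.prod_restrict]
    filter_upwards [ae_restrict_mem (measurableSet_Ioc.prod measurableSet_Ioc)] with z hz
    rw [Real.norm_eq_abs]
    exact hFbound z.1 (Ioc_subset_Icc_self hz.1) z.2 (Ioc_subset_Icc_self hz.2)
  have hmargt : Integrable (fun t => ∫ θ in Ioc (0:ℝ) 1, F (t, θ))
      (volume.restrict (Ioc (0:ℝ) T)) := hFint.integral_prod_left
  have hmargθ : Integrable (fun θ => ∫ t in Ioc (0:ℝ) T, F (t, θ))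
      (volume.restrict (Ioc (0:ℝ) 1)) := hFint.integral_prod_right
  -- pointwise bound in t
  have hper : ∀ t ∈ Ioc (0:ℝ) T,
      (w (y₁ t) - w (y₂ t)) ^ 2 ≤ M ^ 2 * B * ∫ θ in Ioc (0:ℝ) 1, F (t, θ) := by
    intro t ht
    have htIcc : t ∈ Icc (0:ℝ) T := Ioc_subset_Icc_self ht
    have hmθ : Measurable fun θ : ℝ => deriv w (y₂ t + θ * (y₁ t - y₂ t)) * (y₁ t - y₂ t) :=
      (hmw.comp (measurable_const.add (measurable_id'.mul_const _))).mul_const _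
    have hqint : IntegrableOn
        (fun θ : ℝ => deriv w (y₂ t + θ * (y₁ t - y₂ t)) * (y₁ t - y₂ t)) (Ioc (0:ℝ) 1) := by
      apply Measure.integrableOn_of_bounded (M := K * |y₁ t - y₂ t|) measure_Ioc_lt_top.ne
        hmθ.aestronglyMeasurable
      apply ae_of_all
      intro θ
      rw [Real.norm_eq_abs, abs_mul]
      exact mul_le_mul_of_nonneg_right (hK _) (abs_nonneg _)
    have hq2int : IntegrableOn
        (fun θ : ℝ => (deriv w (y₂ t + θ * (y₁ t - y₂ t)) * (y₁ t - y₂ t)) ^ 2)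
        (Ioc (0:ℝ) 1) := by
      apply Measure.integrableOn_of_bounded (M := (K * |y₁ t - y₂ t|) ^ 2) measure_Ioc_lt_top.ne
        (hmθ.pow_const 2).aestronglyMeasurable
      apply ae_of_all
      intro θ
      rw [Real.norm_eq_abs, abs_pow, abs_mul]
      apply pow_le_pow_left₀ (by positivity) _ 2
      exact mul_le_mul_of_nonneg_right (hK _) (abs_nonneg _)
    have hFθint : IntegrableOn (fun θ => F (t, θ)) (Ioc (0:ℝ) 1) := by
      apply Measure.integrableOn_of_bounded (M := M * T * K ^ 2 * M) measure_Ioc_lt_top.ne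
        (hFmeas.comp measurable_prodMk_left).aestronglyMeasurable
      filter_upwards [ae_restrict_mem measurableSet_Ioc] with θ hθ
      rw [Real.norm_eq_abs]
      exact hFbound t htIcc θ (Ioc_subset_Icc_self hθ)
    rw [hftc t]
    calc (∫ θ in Ioc (0:ℝ) 1, deriv w (y₂ t + θ * (y₁ t - y₂ t)) * (y₁ t - y₂ t)) ^ 2
        ≤ 1 * ∫ θ in Ioc (0:ℝ) 1,
            (deriv w (y₂ t + θ * (y₁ t - y₂ t)) * (y₁ t - y₂ t)) ^ 2 := by
          apply sq_setIntegral_le one_pos _ hqint hq2int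
          rw [Real.volume_Ioc, sub_zero]
      _ ≤ ∫ θ in Ioc (0:ℝ) 1, M ^ 2 * B * F (t, θ) := by
          rw [one_mul]
          apply setIntegral_mono_on hq2int (hFθint.const_mul _) measurableSet_Ioc
          intro θ hθ
          have h1 := hya t htIcc θ (Ioc_subset_Icc_self hθ)
          have h2 := hp t htIcc θ (Ioc_subset_Icc_self hθ)
          have hya0 : 0 ≤ y₂ t + θ * (y₁ t - y₂ t) :=
            le_trans (mul_nonneg hMinv.le ht.1.le) h1.1
          have htM : t ≤ M * (y₂ t + θ * (y₁ t - y₂ t)) := by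
            have := mul_le_mul_of_nonneg_left h1.1 hM0.le
            calc t = M * (M⁻¹ * t) := by field_simp
              _ ≤ M * (y₂ t + θ * (y₁ t - y₂ t)) := this
          have h1M : 1 ≤ M * (deriv y₂ t + θ * (deriv y₁ t - deriv y₂ t)) := by
            have := mul_le_mul_of_nonneg_left h2.1 hM0.le
            calc (1:ℝ) = M * M⁻¹ := by field_simp
              _ ≤ _ := this
          have hdsq : (0:ℝ) ≤ deriv w (y₂ t + θ * (y₁ t - y₂ t)) ^ 2 := sq_nonneg _
          have hd2 := hdiff t ht
          calc (deriv w (y₂ t + θ * (y₁ t - y₂ t)) * (y₁ t - y₂ t)) ^ 2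
              = deriv w (y₂ t + θ * (y₁ t - y₂ t)) ^ 2 * (y₁ t - y₂ t) ^ 2 := by ring
            _ ≤ deriv w (y₂ t + θ * (y₁ t - y₂ t)) ^ 2 * (t * B) :=
                mul_le_mul_of_nonneg_left hd2 hdsq
            _ ≤ deriv w (y₂ t + θ * (y₁ t - y₂ t)) ^ 2
                  * ((M * (y₂ t + θ * (y₁ t - y₂ t))) * B) :=
                mul_le_mul_of_nonneg_left (mul_le_mul_of_nonneg_right htM hBnn) hdsq
            _ ≤ deriv w (y₂ t + θ * (y₁ t - y₂ t)) ^ 2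
                  * ((M * (y₂ t + θ * (y₁ t - y₂ t))) * B)
                  * (M * (deriv y₂ t + θ * (deriv y₁ t - deriv y₂ t))) := by
                apply le_mul_of_one_le_right _ h1M
                positivity
            _ = M ^ 2 * B * F (t, θ) := by simp only [hFdef]; ring
      _ = M ^ 2 * B * ∫ θ in Ioc (0:ℝ) 1, F (t, θ) := integral_const_mul _ _
  -- change of variables for each θ
  have hCV : ∀ θ ∈ Ioc (0:ℝ) 1, (∫ t in Ioc (0:ℝ) T, F (t, θ)) ≤ I := by
    intro θ hθ
    have hθIcc : θ ∈ Icc (0:ℝ) 1 := Ioc_subset_Icc_self hθ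
    set f : ℝ → ℝ := fun t => y₂ t + θ * (y₁ t - y₂ t) with hfdef
    set f' : ℝ → ℝ := fun t => deriv y₂ t + θ * (deriv y₁ t - deriv y₂ t) with hf'def
    have hder : ∀ t : ℝ, HasDerivAt f (f' t) t := fun t =>
      (hd₂ t).hasDerivAt.add (((hd₁ t).hasDerivAt.sub (hd₂ t).hasDerivAt).const_mul θ)
    have hsm : StrictMonoOn f (Icc (0:ℝ) T) := by
      apply strictMonoOn_of_deriv_pos (convex_Icc 0 T)
        (fun t _ => ((hder t).differentiableAt.continuousAt).continuousWithinAt)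
      intro x hx
      rw [interior_Icc] at hx
      rw [(hder x).deriv]
      exact lt_of_lt_of_le hMinv (hp x (Ioo_subset_Icc_self hx) θ hθIcc).1
    have hinj : InjOn f (Ioc (0:ℝ) T) := (hsm.injOn).mono Ioc_subset_Icc_self
    have himg : f '' Ioc (0:ℝ) T ⊆ Ioi (0:ℝ) := by
      rintro z ⟨t, ht, rfl⟩
      have := (hya t (Ioc_subset_Icc_self ht) θ hθIcc).1
      have h0 : 0 < M⁻¹ * t := mul_pos hMinv ht.1
      exact lt_of_lt_of_le h0 this
    have hEq : ∫ z in f '' Ioc (0:ℝ) T, (z * deriv w z ^ 2)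
        = ∫ t in Ioc (0:ℝ) T, |f' t| • (f t * deriv w (f t) ^ 2) :=
      integral_image_eq_integral_abs_deriv_smul measurableSet_Ioc
        (fun t _ => (hder t).hasDerivWithinAt) hinj _
    have hcongr : ∫ t in Ioc (0:ℝ) T, F (t, θ)
        = ∫ t in Ioc (0:ℝ) T, |f' t| • (f t * deriv w (f t) ^ 2) := by
      apply setIntegral_congr_fun measurableSet_Ioc
      intro t ht
      have hp0 : 0 < f' t :=
        lt_of_lt_of_le hMinv (hp t (Ioc_subset_Icc_self ht) θ hθIcc).1
      simp only [abs_of_pos hp0]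
      simp only [hFdef, hfdef, hf'def, smul_eq_mul]
      ring
    rw [hcongr, ← hEq]
    apply setIntegral_mono_set hGint
    · filter_upwards [ae_restrict_mem measurableSet_Ioi] with z hz
      exact mul_nonneg (le_of_lt hz) (sq_nonneg _)
    · exact HasSubset.Subset.eventuallyLE himg
  -- put everything together
  have hswap : (∫ t in Ioc (0:ℝ) T, ∫ θ in Ioc (0:ℝ) 1, F (t, θ))
      = ∫ θ in Ioc (0:ℝ) 1, ∫ t in Ioc (0:ℝ) T, F (t, θ) :=
    integral_integral_swap (f := fun t θ => F (t, θ)) hFint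
  have hmain : (∫ t in Ioc (0:ℝ) T, (w (y₁ t) - w (y₂ t)) ^ 2) ≤ M ^ 2 * B * I := by
    have hAint : IntegrableOn (fun t => (w (y₁ t) - w (y₂ t)) ^ 2) (Ioc (0:ℝ) T) := by
      apply Continuous.integrableOn_Ioc
      exact ((hw.continuous.comp hd₁.continuous).sub (hw.continuous.comp hd₂.continuous)).pow 2
    calc (∫ t in Ioc (0:ℝ) T, (w (y₁ t) - w (y₂ t)) ^ 2)
        ≤ ∫ t in Ioc (0:ℝ) T, M ^ 2 * B * ∫ θ in Ioc (0:ℝ) 1, F (t, θ) :=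
          setIntegral_mono_on hAint (hmargt.const_mul _) measurableSet_Ioc hper
      _ = M ^ 2 * B * ∫ t in Ioc (0:ℝ) T, ∫ θ in Ioc (0:ℝ) 1, F (t, θ) := integral_const_mul _ _
      _ = M ^ 2 * B * ∫ θ in Ioc (0:ℝ) 1, ∫ t in Ioc (0:ℝ) T, F (t, θ) := by rw [hswap]
      _ ≤ M ^ 2 * B * ∫ θ in Ioc (0:ℝ) 1, I := by
          apply mul_le_mul_of_nonneg_left _ (by positivity)
          apply setIntegral_mono_on hmargθ (integrableOn_const measure_Ioc_lt_top.ne)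
            measurableSet_Ioc hCV
      _ = M ^ 2 * B * I := by
          rw [setIntegral_const, Real.volume_real_Ioc, smul_eq_mul]
          norm_num
  calc Real.sqrt (∫ t in Ioc (0:ℝ) T, (w (y₁ t) - w (y₂ t)) ^ 2)
      ≤ Real.sqrt (M ^ 2 * B * I) := Real.sqrt_le_sqrt hmain
    _ = M * Real.sqrt B * Real.sqrt I := by
        rw [Real.sqrt_mul (by positivity), Real.sqrt_mul (sq_nonneg M),
          Real.sqrt_sq hM0.le]
end

section
/- The effective velocity of the travelling wave is a step function: with w̄ := ū - μ·(ln v̄)' where (v̄, ū) is the travelling wave profile extended by v̄ = 1, ū = u₋ on x ≤ 0, one has w̄(x) = u₊ for x > 0 and w̄(x) = u₋ for x < 0. -/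
/-- The effective velocity of the travelling wave is a step function. -/
theorem effective_velocity_step (um up vp μ : ℝ) (h : up < um) (hvp : 1 < vp)
    (hμ : 0 < μ)
    (s : ℝ) (hsdef : s = (um - up) / (vp - 1))
    (vb : ℝ → ℝ)
    (hvb : ∀ x, vb x = if x ≤ 0 then 1
        else vp / (1 + (vp - 1) * Real.exp (-s * vp * x / μ)))
    (ub : ℝ → ℝ) (hub : ∀ x, ub x = um + s - s * vb x)
    (wb : ℝ → ℝ)
    (hwb : ∀ x, wb x = ub x - μ * deriv (fun y => Real.log (vb y)) x) :
    (∀ x > (0:ℝ), wb x = up) ∧ (∀ x < (0:ℝ), wb x = um) := by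
  have hvp0 : (0:ℝ) < vp := by linarith
  have hcpos : (0:ℝ) < vp - 1 := by linarith
  have hs : s * (vp - 1) = um - up := by
    rw [hsdef]; field_simp
  constructor
  · intro x hx
    set k : ℝ := -s * vp / μ with hk
    set E : ℝ := Real.exp (k * x) with hE
    have hEpos : 0 < E := Real.exp_pos _
    have hden : 0 < 1 + (vp - 1) * E := by positivity
    have hinner : HasDerivAt (fun y => 1 + (vp - 1) * Real.exp (k * y))
        ((vp - 1) * (Real.exp (k * x) * k)) x := by
      have h1 : HasDerivAt (fun y : ℝ => k * y) k x := by
        simpa using (hasDerivAt_id x).const_mul k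
      simpa using ((h1.exp).const_mul (vp - 1)).const_add 1
    have hg : HasDerivAt (fun y => Real.log vp - Real.log (1 + (vp - 1) * Real.exp (k * y)))
        (0 - ((vp - 1) * (Real.exp (k * x) * k)) / (1 + (vp - 1) * E)) x :=
      (hasDerivAt_const x (Real.log vp)).sub (hinner.log (ne_of_gt hden))
    have heq : (fun y => Real.log (vb y)) =ᶠ[nhds x]
        (fun y => Real.log vp - Real.log (1 + (vp - 1) * Real.exp (k * y))) := by
      filter_upwards [Ioi_mem_nhds hx] with y hy
      have hky : -s * vp * y / μ = k * y := by rw [hk]; ring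
      have hdy : 0 < 1 + (vp - 1) * Real.exp (k * y) := by positivity
      rw [hvb y, if_neg (not_le.mpr hy), hky,
        Real.log_div (ne_of_gt hvp0) (ne_of_gt hdy)]
    have hderiv : deriv (fun y => Real.log (vb y)) x
        = 0 - ((vp - 1) * (Real.exp (k * x) * k)) / (1 + (vp - 1) * E) := by
      rw [heq.deriv_eq, hg.deriv]
    have hvbx : vb x = vp / (1 + (vp - 1) * E) := by
      rw [hvb x, if_neg (not_le.mpr hx)]
      have : -s * vp * x / μ = k * x := by rw [hk]; ring
      rw [this, hE]
    have hμk : μ * k = -(s * vp) := by rw [hk]; field_simp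
    rw [← hE] at hderiv
    rw [hwb x, hub x, hderiv, hvbx]
    have hμ' : μ ≠ 0 := ne_of_gt hμ
    have hden' : (1 : ℝ) + (vp - 1) * E ≠ 0 := ne_of_gt hden
    clear_value k E
    field_simp
    linear_combination (-(1 + (vp - 1) * E)) * hs + ((vp - 1) * E) * hμk
  · intro x hx
    have heq : (fun y => Real.log (vb y)) =ᶠ[nhds x] (fun _ => (0:ℝ)) := by
      filter_upwards [Iio_mem_nhds hx] with y hy
      rw [hvb y, if_pos (le_of_lt hy), Real.log_one]
    have hderiv : deriv (fun y => Real.log (vb y)) x = 0 := by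
      rw [heq.deriv_eq, deriv_const]
    rw [hwb x, hub x, hderiv, hvb x, if_pos (le_of_lt hx)]
    ring
end
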